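/- Let C be an additive (preadditive with biproducts) category, let C₁, C₂ be objects with biproduct C = C₁ ⊕ C₂, with inclusions ι₁, ι₂ and projections ν₁, ν₂. Let I be a two-sided ideal of the endomorphism ring End(C) such that for each i ∈ {1,2}, every product of rᵢ endomorphisms of Cᵢ of the form νᵢ ∘ f ∘ ιᵢ with f ∈ I equals zero. Then fᴺ = 0 for every f ∈ I whenever N ≥ r₁ + r₂ + 1. -/

import Mathlib

open CategoryTheory CategoryTheory.Limits

namespace Stmt2Aux

variable {C : Type*} [Category C] [Preadditive C] [HasBinaryBiproducts C]

/-- The two idempotents `e₁ = ν₁ ≫ ι₁` and `e₂ = ν₂ ≫ ι₂` on `C₁ ⊞ C₂`. -/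
noncomputable def eB (C₁ C₂ : C) : Bool → End (C₁ ⊞ C₂)
  | true => biprod.fst ≫ biprod.inl
  | false => biprod.snd ≫ biprod.inr

/-- Value of a decorated word: `e_{j₀} ≫ x₁ ≫ e_{j₁} ≫ x₂ ≫ ⋯`. -/
noncomputable def val (C₁ C₂ : C) : Bool → List (Bool × End (C₁ ⊞ C₂)) → End (C₁ ⊞ C₂)
  | i, [] => eB C₁ C₂ i
  | i, (j, x) :: t => eB C₁ C₂ i ≫ x ≫ val C₁ C₂ j t

lemma val_nil (C₁ C₂ : C) (i : Bool) : val C₁ C₂ i [] = eB C₁ C₂ i := rfl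

lemma val_cons (C₁ C₂ : C) (i j : Bool) (x : End (C₁ ⊞ C₂))
    (t : List (Bool × End (C₁ ⊞ C₂))) :
    val C₁ C₂ i ((j, x) :: t) = eB C₁ C₂ i ≫ x ≫ val C₁ C₂ j t := rfl

lemma eB_sum (C₁ C₂ : C) : eB C₁ C₂ true + eB C₁ C₂ false = 𝟙 (C₁ ⊞ C₂) := by
  rw [show eB C₁ C₂ true = biprod.fst ≫ biprod.inl from rfl,
    show eB C₁ C₂ false = biprod.snd ≫ biprod.inr from rfl]
  exact biprod.total

omit [HasBinaryBiproducts C] in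
lemma reverse_prod_eq_foldr {D : C} (l : List (End D)) :
    l.reverse.prod = l.foldr (· ≫ ·) (𝟙 D) := by
  induction l with
  | nil => simp [End.one_def]
  | cons a l ih =>
      simp only [List.reverse_cons, List.prod_append, List.prod_cons, List.prod_nil,
        List.foldr_cons, ← ih, mul_one, End.mul_def]

variable {C₁ C₂ : C} (I : TwoSidedIdeal (End (C₁ ⊞ C₂)))

lemma mem_comp_left {g : End (C₁ ⊞ C₂)} (x : End (C₁ ⊞ C₂)) (hg : g ∈ I) : g ≫ x ∈ I := by
  have : x * g ∈ I := I.mul_mem_left x g hg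
  simpa [End.mul_def] using this

/-- Corner extraction: if `g ∈ I` and the word `j :: t` contains at least `s`
occurrences of the node `b`, then `σ ≫ g ≫ val j t` factors as a composite of `s`
corner elements `σ ≫ f ≫ π` (`f ∈ I`) followed by some tail. -/
lemma corner_extract {D : C} (σ : D ⟶ C₁ ⊞ C₂) (π : C₁ ⊞ C₂ ⟶ D) (b : Bool)
    (hb : eB C₁ C₂ b = π ≫ σ) :
    ∀ (t : List (Bool × End (C₁ ⊞ C₂))), (∀ p ∈ t, p.2 ∈ I) →
    ∀ (j : Bool) (g : End (C₁ ⊞ C₂)), g ∈ I →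
    ∀ s : ℕ, s ≤ (j :: t.map Prod.fst).count b →
    ∃ (l : List (End D)) (tail : D ⟶ C₁ ⊞ C₂),
      l.length = s ∧ (∀ c ∈ l, ∃ f ∈ I, c = σ ≫ f ≫ π) ∧
      σ ≫ g ≫ val C₁ C₂ j t = l.foldr (· ≫ ·) (𝟙 D) ≫ tail := by
  intro t
  induction t with
  | nil =>
      intro _ j g hg s hs
      cases s with
      | zero =>
          exact ⟨[], σ ≫ g ≫ val C₁ C₂ j [], rfl, by simp, by simp⟩
      | succ s =>
          have hj : j = b := by
            by_contra h
            simp [List.count_cons, h] at hs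
          subst hj
          have hs1 : s = 0 := by
            simp [List.count_cons] at hs; omega
          subst hs1
          refine ⟨[σ ≫ g ≫ π], σ, rfl, ?_, ?_⟩
          · rintro c hc
            simp at hc
            exact ⟨g, hg, hc⟩
          · simp [val_nil, hb]
  | cons p t ih =>
      obtain ⟨j', x⟩ := p
      intro hmem j g hg s hs
      have hx : x ∈ I := hmem (j', x) (by simp)
      have hmem' : ∀ p ∈ t, p.2 ∈ I := fun p hp => hmem p (by simp [hp])
      cases s with
      | zero => exact ⟨[], σ ≫ g ≫ val C₁ C₂ j ((j', x) :: t), rfl, by simp, by simp⟩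
      | succ s =>
          by_cases hj : j = b
          · subst hj
            have hs' : s ≤ (j' :: t.map Prod.fst).count j := by
              simp [List.count_cons] at hs ⊢; omega
            obtain ⟨l, tail, hlen, hl, heq⟩ := ih hmem' j' x hx s hs'
            refine ⟨(σ ≫ g ≫ π) :: l, tail, by simp [hlen], ?_, ?_⟩
            · rintro c hc
              rcases List.mem_cons.mp hc with h | h
              · exact ⟨g, hg, h⟩
              · exact hl c h
            · simp only [val_cons, hb, List.foldr_cons, Category.assoc]
              rw [← heq]
          · have hs' : s + 1 ≤ (j' :: t.map Prod.fst).count b := by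
              simpa [List.count_cons, hj] using hs
            have hg' : (g ≫ eB C₁ C₂ j ≫ x) ∈ I := mem_comp_left I _ hg
            obtain ⟨l, tail, hlen, hl, heq⟩ := ih hmem' j' (g ≫ eB C₁ C₂ j ≫ x) hg' (s + 1) hs'
            refine ⟨l, tail, hlen, hl, ?_⟩
            rw [← heq]
            simp [val_cons]

/-- Vanishing of word values containing at least `r + 1` occurrences of node `b`. -/
lemma val_eq_zero {D : C} (σ : D ⟶ C₁ ⊞ C₂) (π : C₁ ⊞ C₂ ⟶ D) (b : Bool)
    (hb : eB C₁ C₂ b = π ≫ σ) (r : ℕ)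
    (hr : ∀ l : List (End D),
      (∀ c ∈ l, ∃ f ∈ I, c = σ ≫ f ≫ π) → l.length = r → l.prod = 0) :
    ∀ (w : List (Bool × End (C₁ ⊞ C₂))) (i : Bool), (∀ p ∈ w, p.2 ∈ I) →
      r + 1 ≤ (i :: w.map Prod.fst).count b → val C₁ C₂ i w = 0 := by
  intro w
  induction w with
  | nil =>
      intro i _ hcount
      have hi : i = b := by
        by_contra h
        simp [List.count_cons, h] at hcount
      subst hi
      have hr0 : r = 0 := by simp [List.count_cons] at hcount; omega
      subst hr0
      have h1 : (𝟙 D : End D) = 0 := by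
        simpa [End.one_def] using hr [] (by simp) rfl
      have h2 : π ≫ (𝟙 D) ≫ σ = 0 := by rw [h1]; simp
      rw [val_nil, hb]
      simpa using h2
  | cons p w ih =>
      obtain ⟨j, x⟩ := p
      intro i hmem hcount
      have hx : x ∈ I := hmem (j, x) (by simp)
      have hmem' : ∀ p ∈ w, p.2 ∈ I := fun p hp => hmem p (by simp [hp])
      by_cases hi : i = b
      · subst hi
        have hs : r ≤ (j :: w.map Prod.fst).count i := by
          simp [List.count_cons] at hcount ⊢; omega
        obtain ⟨l, tail, hlen, hl, heq⟩ :=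
          corner_extract I σ π i hb w hmem' j x hx r hs
        have hml : ∀ c ∈ l.reverse, ∃ f ∈ I, c = σ ≫ f ≫ π := by
          intro c hc; exact hl c (List.mem_reverse.mp hc)
        have hprod : l.reverse.prod = 0 := hr l.reverse hml (by simp [hlen])
        have hfold : l.foldr (· ≫ ·) (𝟙 D) = 0 := by
          rw [← reverse_prod_eq_foldr]; exact hprod
        rw [val_cons, hb, Category.assoc]
        rw [show σ ≫ x ≫ val C₁ C₂ j w = (σ ≫ x ≫ val C₁ C₂ j w) from rfl, heq, hfold]
        simp
      · have hcount' : r + 1 ≤ (j :: w.map Prod.fst).count b := by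
          simpa [List.count_cons, hi] using hcount
        have hz : val C₁ C₂ j w = 0 := ih j hmem' hcount'
        rw [val_cons, hz]
        simp

/-- Expansion lemma: if `m` composed with every decorated word on `n` copies of `f`
vanishes, then `m ≫ f ^ n` vanishes. -/
lemma expansion (f : End (C₁ ⊞ C₂)) :
    ∀ (n : ℕ) (m : End (C₁ ⊞ C₂)),
      (∀ (i : Bool) (w : List (Bool × End (C₁ ⊞ C₂))),
        w.map Prod.snd = List.replicate n f → m ≫ val C₁ C₂ i w = 0) →
      m ≫ f ^ n = 0 := by
  intro n
  induction n with
  | zero =>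
      intro m h
      have h1 : m ≫ eB C₁ C₂ true = 0 := h true [] (by simp)
      have h2 : m ≫ eB C₁ C₂ false = 0 := h false [] (by simp)
      have h3 : m ≫ (eB C₁ C₂ true + eB C₁ C₂ false) = 0 := by
        rw [Preadditive.comp_add, h1, h2]; simp
      rw [eB_sum] at h3
      simpa using h3
  | succ n ih =>
      intro m h
      have key : ∀ i : Bool, (m ≫ eB C₁ C₂ i ≫ f) ≫ f ^ n = 0 := by
        intro i
        apply ih
        intro i' w hw
        have hh := h i ((i', f) :: w) (by simp [hw, List.replicate_succ])
        rw [val_cons] at hh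
        simpa using hh
      have hpow : (f ^ (n + 1) : End (C₁ ⊞ C₂)) = f ≫ f ^ n := by
        rw [pow_succ, End.mul_def]
      calc m ≫ f ^ (n + 1) = m ≫ 𝟙 (C₁ ⊞ C₂) ≫ f ≫ f ^ n := by rw [hpow]; simp
        _ = m ≫ (eB C₁ C₂ true + eB C₁ C₂ false) ≫ f ≫ f ^ n := by rw [eB_sum]
        _ = (m ≫ eB C₁ C₂ true ≫ f) ≫ f ^ n + (m ≫ eB C₁ C₂ false ≫ f) ≫ f ^ n := by
              simp only [← End.mul_def, add_mul, mul_add, mul_assoc]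
        _ = 0 := by rw [key true, key false]; simp

lemma count_bool (l : List Bool) : l.count true + l.count false = l.length := by
  induction l with
  | nil => simp
  | cons a l ih => cases a <;> simp [List.count_cons] <;> omega

end Stmt2Aux

/-- in an additive category with biproduct C = C₁ ⊞ C₂, if I is a
two-sided ideal of End(C₁ ⊞ C₂) such that every product of rᵢ endomorphisms of Cᵢ
of the form νᵢ ∘ f ∘ ιᵢ (f ∈ I) vanishes, then fᴺ = 0 for every f ∈ I and
every N ≥ r₁ + r₂ + 1. -/
theorem stmt2 {C : Type*} [Category C] [Preadditive C] [HasBinaryBiproducts C]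
    (C₁ C₂ : C) (I : TwoSidedIdeal (End (C₁ ⊞ C₂))) (r₁ r₂ : ℕ)
    (hr₁ : ∀ l : List (End C₁),
      (∀ g ∈ l, ∃ f ∈ I, g = biprod.inl ≫ f ≫ biprod.fst) →
      l.length = r₁ → l.prod = 0)
    (hr₂ : ∀ l : List (End C₂),
      (∀ g ∈ l, ∃ f ∈ I, g = biprod.inr ≫ f ≫ biprod.snd) →
      l.length = r₂ → l.prod = 0) :
    ∀ f ∈ I, ∀ N : ℕ, r₁ + r₂ + 1 ≤ N → f ^ N = 0 := by
  intro f hf N hN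
  have main : 𝟙 (C₁ ⊞ C₂) ≫ f ^ N = 0 := by
    apply Stmt2Aux.expansion f N
    intro i w hw
    have hmem : ∀ p ∈ w, p.2 ∈ I := by
      intro p hp
      have h1 : p.2 ∈ w.map Prod.snd := List.mem_map_of_mem (f := Prod.snd) hp
      rw [hw] at h1
      have h2 := List.eq_of_mem_replicate h1
      rwa [h2]
    have hlen : w.length = N := by
      have := congrArg List.length hw
      simpa using this
    have hcount := Stmt2Aux.count_bool (i :: w.map Prod.fst)
    have hlen' : (i :: w.map Prod.fst).length = N + 1 := by simp [hlen]
    rw [hlen'] at hcount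
    have hval : Stmt2Aux.val C₁ C₂ i w = 0 := by
      rcases le_or_gt (r₁ + 1) ((i :: w.map Prod.fst).count true) with h | h
      · exact Stmt2Aux.val_eq_zero I biprod.inl biprod.fst true rfl r₁ hr₁ w i hmem h
      · have h2 : r₂ + 1 ≤ (i :: w.map Prod.fst).count false := by omega
        exact Stmt2Aux.val_eq_zero I biprod.inr biprod.snd false rfl r₂ hr₂ w i hmem h2
    rw [hval]
    simp
  simpa using main
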